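/- Let S, T ⊆ ℕ² be nonempty sets. Suppose that for every pair (m, n) of coprime positive integers, min{ m·i + n·j : (i,j) ∈ S } = min{ m·i + n·j : (i,j) ∈ T }. Then the Newton diagrams coincide: Δ(S) = Δ(T). -/

import Mathlib

/-- The closed first quadrant `ℝ₊² = [0,∞)²` of `ℝ²`. -/
def firstQuadrant : Set (ℝ × ℝ) := {p | 0 ≤ p.1 ∧ 0 ≤ p.2}

/-- The Newton diagram of a set `S ⊆ ℝ²`: the convex hull of the union of the
translates `s + ℝ₊²` over `s ∈ S`. -/
noncomputable def newtonDiagram (S : Set (ℝ × ℝ)) : Set (ℝ × ℝ) :=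
  convexHull ℝ (⋃ s ∈ S, (fun q => s + q) '' firstQuadrant)

/-- The natural embedding `ℕ² ↪ ℝ²`. -/
def natEmbed (p : ℕ × ℕ) : ℝ × ℝ := ((p.1 : ℝ), (p.2 : ℝ))

open Set Pointwise

lemma convex_firstQuadrant : Convex ℝ firstQuadrant := by
  intro x hx y hy a b ha hb _
  obtain ⟨hx1, hx2⟩ := hx; obtain ⟨hy1, hy2⟩ := hy
  constructor <;>
    simp only [Prod.fst_add, Prod.snd_add, Prod.smul_fst, Prod.smul_snd, smul_eq_mul] <;>
    exact add_nonneg (mul_nonneg (by assumption) (by assumption))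
      (mul_nonneg (by assumption) (by assumption))

lemma isClosed_firstQuadrant : IsClosed firstQuadrant :=
  (isClosed_le continuous_const continuous_fst).inter
    (isClosed_le continuous_const continuous_snd)

lemma union_translates (P : Set (ℝ × ℝ)) :
    (⋃ s ∈ P, (fun q => s + q) '' firstQuadrant) = P + firstQuadrant := by
  ext x
  simp only [mem_iUnion, mem_image, Set.mem_add, exists_prop]

lemma newtonDiagram_repr (P : Set (ℝ × ℝ)) :
    newtonDiagram P = convexHull ℝ P + firstQuadrant := by
  rw [newtonDiagram, union_translates, convexHull_add, convex_firstQuadrant.convexHull_eq]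

/-- The minimal value of `m*i + n*j` over `S`. -/
noncomputable def Lval (S : Set (ℕ × ℕ)) (m n : ℕ) : ℕ :=
  sInf ((fun p : ℕ × ℕ => m * p.1 + n * p.2) '' S)

/-- The intersection of all the coprime halfplanes. -/
def newtonA (S : Set (ℕ × ℕ)) : Set (ℝ × ℝ) :=
  {p | ∀ m n : ℕ, 0 < m → 0 < n → Nat.Coprime m n →
    (Lval S m n : ℝ) ≤ m * p.1 + n * p.2}

lemma Lval_le {S : Set (ℕ × ℕ)} {s : ℕ × ℕ} (hs : s ∈ S) (m n : ℕ) :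
    Lval S m n ≤ m * s.1 + n * s.2 :=
  Nat.sInf_le ⟨s, hs, rfl⟩

lemma convex_newtonA (S : Set (ℕ × ℕ)) : Convex ℝ (newtonA S) := by
  intro x hx y hy a b ha hb hab
  intro m n hm hn hc
  have h1 := hx m n hm hn hc
  have h2 := hy m n hm hn hc
  simp only [Prod.fst_add, Prod.snd_add, Prod.smul_fst, Prod.smul_snd, smul_eq_mul]
  nlinarith [h1, h2, ha, hb]

lemma newtonDiagram_subset_newtonA (S : Set (ℕ × ℕ)) :
    newtonDiagram (natEmbed '' S) ⊆ newtonA S := by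
  rw [newtonDiagram]
  apply convexHull_min _ (convex_newtonA S)
  rintro x hx
  simp only [mem_iUnion, mem_image, exists_prop] at hx
  obtain ⟨z, ⟨s, hs, rfl⟩, q, hq, rfl⟩ := hx
  intro m n hm hn hc
  have hL : (Lval S m n : ℝ) ≤ (m : ℝ) * s.1 + n * s.2 := by
    exact_mod_cast Nat.cast_le.mpr (Lval_le hs m n)
  obtain ⟨hq1, hq2⟩ := hq
  have : (natEmbed s + q).1 = s.1 + q.1 := rfl
  have : (natEmbed s + q).2 = s.2 + q.2 := rfl
  show (Lval S m n : ℝ) ≤ m * (natEmbed s + q).1 + n * (natEmbed s + q).2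
  have hm' : (0:ℝ) ≤ m := Nat.cast_nonneg m
  have hn' : (0:ℝ) ≤ n := Nat.cast_nonneg n
  have e1 : (natEmbed s + q).1 = (s.1 : ℝ) + q.1 := rfl
  have e2 : (natEmbed s + q).2 = (s.2 : ℝ) + q.2 := rfl
  rw [e1, e2]
  nlinarith [mul_nonneg hm' hq1, mul_nonneg hn' hq2]

/-- Points of `newtonA S` lie in the first quadrant. -/
lemma newtonA_subset_quadrant {S : Set (ℕ × ℕ)} (hS : S.Nonempty) {p : ℝ × ℝ}
    (hp : p ∈ newtonA S) : 0 ≤ p.1 ∧ 0 ≤ p.2 := by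
  constructor
  · by_contra h1
    push_neg at h1
    obtain ⟨k, hk⟩ := exists_nat_gt (p.2 / (-p.1))
    have hkk : (p.2 / (-p.1)) < (k + 1 : ℕ) := by push_cast; push_cast at hk; linarith
    have h2 : p.2 < ((k+1 : ℕ) : ℝ) * (-p.1) := by
      rwa [div_lt_iff₀ (by linarith)] at hkk
    have := hp (k+1) 1 (Nat.succ_pos k) Nat.one_pos (Nat.coprime_one_right _)
    have h0 : (0:ℝ) ≤ (Lval S (k+1) 1 : ℝ) := Nat.cast_nonneg _
    push_cast at this h2 ⊢
    nlinarith
  · by_contra h1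
    push_neg at h1
    obtain ⟨k, hk⟩ := exists_nat_gt (p.1 / (-p.2))
    have hkk : (p.1 / (-p.2)) < (k + 1 : ℕ) := by push_cast; push_cast at hk; linarith
    have h2 : p.1 < ((k+1 : ℕ) : ℝ) * (-p.2) := by
      rwa [div_lt_iff₀ (by linarith)] at hkk
    have := hp 1 (k+1) Nat.one_pos (Nat.succ_pos k) (Nat.coprime_one_left _)
    have h0 : (0:ℝ) ≤ (Lval S 1 (k+1) : ℝ) := Nat.cast_nonneg _
    push_cast at this h2 ⊢
    nlinarith

/-- The set of minimal elements of `S`. -/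
def minSet (S : Set (ℕ × ℕ)) : Set (ℕ × ℕ) :=
  {f ∈ S | ∀ g ∈ S, g ≤ f → g = f}

lemma minSet_subset (S : Set (ℕ × ℕ)) : minSet S ⊆ S := fun _ h => h.1

/-- Every element of `S` dominates a minimal element. -/
lemma exists_minSet_le (S : Set (ℕ × ℕ)) : ∀ s ∈ S, ∃ f ∈ minSet S, f ≤ s := by
  have key : ∀ N : ℕ, ∀ s ∈ S, s.1 + s.2 ≤ N → ∃ f ∈ minSet S, f ≤ s := by
    intro N
    induction N with
    | zero =>
      intro s hs hN
      refine ⟨s, ⟨hs, ?_⟩, le_refl s⟩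
      intro g hg hgs
      have : g.1 ≤ s.1 ∧ g.2 ≤ s.2 := Prod.le_def.mp hgs
      have : g = (0, 0) := by ext <;> omega
      have : s = (0, 0) := by ext <;> omega
      simp_all
    | succ N ih =>
      intro s hs hN
      by_cases hmin : ∀ g ∈ S, g ≤ s → g = s
      · exact ⟨s, ⟨hs, hmin⟩, le_refl s⟩
      · push_neg at hmin
        obtain ⟨g, hg, hgs, hne⟩ := hmin
        have h1 : g.1 ≤ s.1 ∧ g.2 ≤ s.2 := Prod.le_def.mp hgs
        have h2 : g.1 ≠ s.1 ∨ g.2 ≠ s.2 := by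
          by_contra hc; push_neg at hc; exact hne (Prod.ext hc.1 hc.2)
        have hsum : g.1 + g.2 ≤ N := by omega
        obtain ⟨f, hf, hfg⟩ := ih g hg hsum
        exact ⟨f, hf, hfg.trans hgs⟩
  intro s hs
  exact key (s.1 + s.2) s hs le_rfl

lemma minSet_fst_injOn (S : Set (ℕ × ℕ)) : InjOn Prod.fst (minSet S) := by
  intro f hf g hg hfg
  rcases le_total f.2 g.2 with h | h
  · exact (hg.2 f hf.1 (Prod.le_def.mpr ⟨le_of_eq hfg, h⟩))
  · exact (hf.2 g hg.1 (Prod.le_def.mpr ⟨le_of_eq hfg.symm, h⟩)).symm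

lemma minSet_snd_injOn (S : Set (ℕ × ℕ)) : InjOn Prod.snd (minSet S) := by
  intro f hf g hg hfg
  rcases le_total f.1 g.1 with h | h
  · exact (hg.2 f hf.1 (Prod.le_def.mpr ⟨h, le_of_eq hfg⟩))
  · exact (hf.2 g hg.1 (Prod.le_def.mpr ⟨h, le_of_eq hfg.symm⟩)).symm

lemma minSet_finite {S : Set (ℕ × ℕ)} (hS : S.Nonempty) : (minSet S).Finite := by
  obtain ⟨s₀, hs₀⟩ := hS
  obtain ⟨f₀, hf₀, _⟩ := exists_minSet_le S s₀ hs₀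
  have hsub : minSet S ⊆ (minSet S ∩ {x | x.1 ≤ f₀.1}) ∪ (minSet S ∩ {x | x.2 ≤ f₀.2}) := by
    intro f hf
    by_cases hle : f₀ ≤ f
    · have : f₀ = f := hf.2 f₀ hf₀.1 hle
      left; exact ⟨hf, by simp [← this]⟩
    · rw [Prod.le_def] at hle
      push_neg at hle
      by_cases h1 : f₀.1 ≤ f.1
      · right; exact ⟨hf, le_of_lt (hle h1)⟩
      · left; exact ⟨hf, show f.1 ≤ f₀.1 by omega⟩
  apply Set.Finite.subset _ hsub
  apply Set.Finite.union
  · apply Set.Finite.of_finite_image _ ((minSet_fst_injOn S).mono inter_subset_left)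
    exact (Set.finite_Iic f₀.1).subset (by rintro x ⟨y, ⟨_, hy⟩, rfl⟩; exact hy)
  · apply Set.Finite.of_finite_image _ ((minSet_snd_injOn S).mono inter_subset_left)
    exact (Set.finite_Iic f₀.2).subset (by rintro x ⟨y, ⟨_, hy⟩, rfl⟩; exact hy)

lemma add_quadrant_eq (S : Set (ℕ × ℕ)) :
    natEmbed '' S + firstQuadrant = natEmbed '' (minSet S) + firstQuadrant := by
  apply Subset.antisymm
  · intro x hx
    rw [Set.mem_add] at hx
    obtain ⟨y, ⟨s, hs, rfl⟩, q, hq, rfl⟩ := hx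
    obtain ⟨f, hf, hfs⟩ := exists_minSet_le S s hs
    rw [Set.mem_add]
    refine ⟨natEmbed f, mem_image_of_mem _ hf, (natEmbed s - natEmbed f) + q, ?_, by abel⟩
    have h1 : (f.1 : ℝ) ≤ (s.1 : ℝ) := Nat.cast_le.mpr hfs.1
    have h2 : (f.2 : ℝ) ≤ (s.2 : ℝ) := Nat.cast_le.mpr hfs.2
    obtain ⟨hq1, hq2⟩ := hq
    constructor
    · show 0 ≤ ((s.1 : ℝ) - f.1) + q.1; linarith
    · show 0 ≤ ((s.2 : ℝ) - f.2) + q.2; linarith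
  · exact Set.add_subset_add (Set.image_mono (minSet_subset S)) Subset.rfl

set_option maxHeartbeats 2000000 in
lemma newtonA_subset_newtonDiagram {S : Set (ℕ × ℕ)} (hS : S.Nonempty) :
    newtonA S ⊆ newtonDiagram (natEmbed '' S) := by
  intro p hp
  obtain ⟨hp1, hp2⟩ := newtonA_subset_quadrant hS hp
  have hFfin : (minSet S).Finite := minSet_finite hS
  set C := convexHull ℝ (natEmbed '' minSet S) with hCdef
  have hrepr : newtonDiagram (natEmbed '' S) = C + firstQuadrant := by
    rw [newtonDiagram, union_translates, add_quadrant_eq, convexHull_add,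
      convex_firstQuadrant.convexHull_eq]
  rw [hrepr]
  by_contra hpD
  have hCcomp : IsCompact C := (hFfin.image natEmbed).isCompact_convexHull ℝ
  have hclosed : IsClosed (C + firstQuadrant) :=
    isClosed_firstQuadrant.add_left_of_isCompact hCcomp
  have hconv : Convex ℝ (C + firstQuadrant) := (convex_convexHull ℝ _).add convex_firstQuadrant
  obtain ⟨f, u, hfp, hfb⟩ := geometric_hahn_banach_point_closed hconv hclosed hpD
  have hmem : ∀ s ∈ S, ∀ q ∈ firstQuadrant, natEmbed s + q ∈ C + firstQuadrant := by
    intro s hs q hq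
    have h1 : natEmbed s + q ∈ natEmbed '' S + firstQuadrant :=
      Set.add_mem_add (mem_image_of_mem _ hs) hq
    rw [add_quadrant_eq] at h1
    exact Set.add_subset_add (subset_convexHull ℝ _) Subset.rfl h1
  set a := f (1, 0) with hadef
  set b := f (0, 1) with hbdef
  have hfz : ∀ z : ℝ × ℝ, f z = z.1 * a + z.2 * b := by
    intro z
    have hz : z = z.1 • ((1:ℝ), (0:ℝ)) + z.2 • ((0:ℝ), (1:ℝ)) := by
      ext <;> simp
    calc f z = f (z.1 • ((1:ℝ), (0:ℝ)) + z.2 • ((0:ℝ), (1:ℝ))) := by rw [← hz]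
      _ = z.1 * a + z.2 * b := by
          rw [map_add, map_smul, map_smul, smul_eq_mul, smul_eq_mul]
  have hzeroQ : (0 : ℝ × ℝ) ∈ firstQuadrant := ⟨le_refl 0, le_refl 0⟩
  have hS' : ∀ s ∈ S, u < (s.1 : ℝ) * a + (s.2 : ℝ) * b := by
    intro s hs
    have h := hfb _ (hmem s hs 0 hzeroQ)
    rw [add_zero, hfz] at h
    exact h
  obtain ⟨s₀, hs₀⟩ := hS
  have ha : 0 ≤ a := by
    by_contra hneg
    push_neg at hneg
    set t : ℝ := (u - ((s₀.1 : ℝ) * a + s₀.2 * b)) / a with ht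
    have htpos : 0 ≤ t := by
      have := hS' s₀ hs₀
      apply div_nonneg_of_nonpos <;> linarith
    have hmem' := hfb _ (hmem s₀ hs₀ (t, 0) ⟨htpos, le_refl 0⟩)
    rw [hfz] at hmem'
    have e1 : (natEmbed s₀ + (t, 0)).1 = (s₀.1 : ℝ) + t := rfl
    have e2 : (natEmbed s₀ + (t, 0)).2 = (s₀.2 : ℝ) + 0 := rfl
    rw [e1, e2, add_zero] at hmem'
    have hta : t * a = u - ((s₀.1 : ℝ) * a + s₀.2 * b) :=
      div_mul_cancel₀ _ (ne_of_lt hneg)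
    nlinarith
  have hb : 0 ≤ b := by
    by_contra hneg
    push_neg at hneg
    set t : ℝ := (u - ((s₀.1 : ℝ) * a + s₀.2 * b)) / b with ht
    have htpos : 0 ≤ t := by
      have := hS' s₀ hs₀
      apply div_nonneg_of_nonpos <;> linarith
    have hmem' := hfb _ (hmem s₀ hs₀ (0, t) ⟨le_refl 0, htpos⟩)
    rw [hfz] at hmem'
    have e1 : (natEmbed s₀ + (0, t)).1 = (s₀.1 : ℝ) + 0 := rfl
    have e2 : (natEmbed s₀ + (0, t)).2 = (s₀.2 : ℝ) + t := rfl
    rw [e1, e2, add_zero] at hmem'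
    have hta : t * b = u - ((s₀.1 : ℝ) * a + s₀.2 * b) :=
      div_mul_cancel₀ _ (ne_of_lt hneg)
    nlinarith
  -- perturb to strictly positive coefficients
  have hfpu : f p < u := hfp
  have hden : (0:ℝ) < p.1 + p.2 + 1 := by linarith
  set ε : ℝ := (u - f p) / (p.1 + p.2 + 1) with hεdef
  have hε : 0 < ε := div_pos (by linarith) hden
  have hεc : ε * (p.1 + p.2 + 1) = u - f p := div_mul_cancel₀ _ (ne_of_gt hden)
  set a' : ℝ := a + ε with ha'def
  set b' : ℝ := b + ε with hb'def
  have ha' : 0 < a' := by simp only [ha'def]; linarith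
  have hb' : 0 < b' := by simp only [hb'def]; linarith
  have hpa' : p.1 * a' + p.2 * b' < u := by
    have e : p.1 * a' + p.2 * b' = f p + ε * (p.1 + p.2) := by rw [hfz p]; ring
    rw [e]
    nlinarith
  have hsa' : ∀ s ∈ S, u < (s.1 : ℝ) * a' + s.2 * b' := by
    intro s hs
    have h := hS' s hs
    have e : (s.1 : ℝ) * a' + s.2 * b' = (s.1 : ℝ) * a + s.2 * b + ε * (s.1 + s.2) := by ring
    have h1 : (0:ℝ) ≤ ε * (s.1 + s.2) :=
      mul_nonneg hε.le (add_nonneg (Nat.cast_nonneg _) (Nat.cast_nonneg _))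
    rw [e]; linarith
  -- choose rational coefficients
  set δ : ℝ := (u - (p.1 * a' + p.2 * b')) / (p.1 + p.2 + 1) with hδdef
  have hδ : 0 < δ := div_pos (by linarith) hden
  have hδc : δ * (p.1 + p.2 + 1) = u - (p.1 * a' + p.2 * b') := div_mul_cancel₀ _ (ne_of_gt hden)
  obtain ⟨r₁, hr₁a, hr₁b⟩ := exists_rat_btwn (show a' < a' + δ by linarith)
  obtain ⟨r₂, hr₂a, hr₂b⟩ := exists_rat_btwn (show b' < b' + δ by linarith)
  have hr₁pos : 0 < r₁ := by exact_mod_cast ha'.trans hr₁a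
  have hr₂pos : 0 < r₂ := by exact_mod_cast hb'.trans hr₂a
  have hpr : p.1 * (r₁ : ℝ) + p.2 * (r₂ : ℝ) < u := by
    have e1 : p.1 * (r₁ : ℝ) ≤ p.1 * (a' + δ) := mul_le_mul_of_nonneg_left hr₁b.le hp1
    have e2 : p.2 * (r₂ : ℝ) ≤ p.2 * (b' + δ) := mul_le_mul_of_nonneg_left hr₂b.le hp2
    nlinarith
  have hsr : ∀ s ∈ S, u < (s.1 : ℝ) * r₁ + (s.2 : ℝ) * r₂ := by
    intro s hs
    have h := hsa' s hs
    have e1 : (s.1 : ℝ) * a' ≤ (s.1 : ℝ) * r₁ :=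
      mul_le_mul_of_nonneg_left hr₁a.le (Nat.cast_nonneg _)
    have e2 : (s.2 : ℝ) * b' ≤ (s.2 : ℝ) * r₂ :=
      mul_le_mul_of_nonneg_left hr₂a.le (Nat.cast_nonneg _)
    linarith
  -- produce coprime positive natural coefficients
  have hn₁ : 0 < r₁.num := Rat.num_pos.mpr hr₁pos
  have hn₂ : 0 < r₂.num := Rat.num_pos.mpr hr₂pos
  set m₁ : ℕ := r₁.num.toNat * r₂.den with hm₁def
  set m₂ : ℕ := r₂.num.toNat * r₁.den with hm₂def
  have hm₁pos : 0 < m₁ := Nat.mul_pos (by omega) r₂.pos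
  have hm₂pos : 0 < m₂ := Nat.mul_pos (by omega) r₁.pos
  set N : ℕ := r₁.den * r₂.den with hNdef
  have hNpos : 0 < N := Nat.mul_pos r₁.pos r₂.pos
  have hm₁r : (m₁ : ℝ) = (N : ℝ) * (r₁ : ℝ) := by
    have e : ((r₁.num.toNat : ℕ) : ℝ) = ((r₁.num : ℤ) : ℝ) := by
      exact_mod_cast congrArg (Int.cast : ℤ → ℝ) (Int.toNat_of_nonneg hn₁.le)
    rw [hm₁def, hNdef, Rat.cast_def]
    push_cast [e]
    field_simp
  have hm₂r : (m₂ : ℝ) = (N : ℝ) * (r₂ : ℝ) := by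
    have e : ((r₂.num.toNat : ℕ) : ℝ) = ((r₂.num : ℤ) : ℝ) := by
      exact_mod_cast congrArg (Int.cast : ℤ → ℝ) (Int.toNat_of_nonneg hn₂.le)
    rw [hm₂def, hNdef, Rat.cast_def]
    push_cast [e]
    field_simp
  set d : ℕ := Nat.gcd m₁ m₂ with hddef
  have hdpos : 0 < d := Nat.gcd_pos_of_pos_left _ hm₁pos
  set m : ℕ := m₁ / d with hmdef
  set n : ℕ := m₂ / d with hndef
  have hmpos : 0 < m := Nat.div_pos (Nat.le_of_dvd hm₁pos (Nat.gcd_dvd_left _ _)) hdpos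
  have hnpos : 0 < n := Nat.div_pos (Nat.le_of_dvd hm₂pos (Nat.gcd_dvd_right _ _)) hdpos
  have hcop : Nat.Coprime m n := Nat.coprime_div_gcd_div_gcd hdpos
  have hmd : m * d = m₁ := Nat.div_mul_cancel (Nat.gcd_dvd_left _ _)
  have hnd : n * d = m₂ := Nat.div_mul_cancel (Nat.gcd_dvd_right _ _)
  set lam : ℝ := (N : ℝ) / (d : ℝ) with hlamdef
  have hlam : 0 < lam := div_pos (Nat.cast_pos.mpr hNpos) (Nat.cast_pos.mpr hdpos)
  have hdne : (d : ℝ) ≠ 0 := ne_of_gt (Nat.cast_pos.mpr hdpos)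
  have hmr : (m : ℝ) = lam * r₁ := by
    have h1 : (m : ℝ) * d = (m₁ : ℝ) := by exact_mod_cast congrArg (Nat.cast : ℕ → ℝ) hmd
    rw [hm₁r] at h1
    rw [hlamdef]
    field_simp
    linarith [h1]
  have hnr : (n : ℝ) = lam * r₂ := by
    have h1 : (n : ℝ) * d = (m₂ : ℝ) := by exact_mod_cast congrArg (Nat.cast : ℕ → ℝ) hnd
    rw [hm₂r] at h1
    rw [hlamdef]
    field_simp
    linarith [h1]
  -- derive the contradiction
  obtain ⟨sm, hsm, hLeq⟩ := Nat.sInf_mem (Set.Nonempty.image (fun p : ℕ × ℕ => m * p.1 + n * p.2) ⟨s₀, hs₀⟩)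
  have hLcast : (Lval S m n : ℝ) = (m : ℝ) * sm.1 + n * sm.2 := by
    rw [Lval, ← hLeq]; push_cast; ring
  have hcontr := hp m n hmpos hnpos hcop
  have e1 : (m : ℝ) * p.1 + n * p.2 = lam * ((r₁ : ℝ) * p.1 + r₂ * p.2) := by
    rw [hmr, hnr]; ring
  have e2 : (m : ℝ) * sm.1 + n * sm.2 = lam * ((r₁ : ℝ) * sm.1 + r₂ * sm.2) := by
    rw [hmr, hnr]; ring
  have hlt : (m : ℝ) * p.1 + n * p.2 < (m : ℝ) * sm.1 + n * sm.2 := by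
    rw [e1, e2]
    apply mul_lt_mul_of_pos_left _ hlam
    have := hsr sm hsm
    nlinarith [hpr]
  rw [hLcast] at hcontr
  linarith

lemma newtonDiagram_eq_newtonA {S : Set (ℕ × ℕ)} (hS : S.Nonempty) :
    newtonDiagram (natEmbed '' S) = newtonA S :=
  Subset.antisymm (newtonDiagram_subset_newtonA S) (newtonA_subset_newtonDiagram hS)

/-- If two nonempty subsets `S, T ⊆ ℕ²` have the same minimal value
of `m·i + n·j` for every pair of coprime positive integers `(m, n)`, then their
Newton diagrams coincide. -/
theorem newtonDiagram_eq_of_min_eq (S T : Set (ℕ × ℕ)) (hS : S.Nonempty) (hT : T.Nonempty)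
    (h : ∀ m n : ℕ, 0 < m → 0 < n → Nat.Coprime m n →
      sInf ((fun p : ℕ × ℕ => m * p.1 + n * p.2) '' S) =
        sInf ((fun p : ℕ × ℕ => m * p.1 + n * p.2) '' T)) :
    newtonDiagram (natEmbed '' S) = newtonDiagram (natEmbed '' T) := by
  rw [newtonDiagram_eq_newtonA hS, newtonDiagram_eq_newtonA hT]
  have hL : ∀ m n : ℕ, 0 < m → 0 < n → Nat.Coprime m n → Lval S m n = Lval T m n := by
    intro m n hm hn hc
    exact h m n hm hn hc
  ext p
  constructor
  · intro hp m n hm hn hc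
    rw [← hL m n hm hn hc]
    exact hp m n hm hn hc
  · intro hp m n hm hn hc
    rw [hL m n hm hn hc]
    exact hp m n hm hn hc
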